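/- arXiv:1608.05518 — 2 statements merged into one kernel-verified Lean document; each statement's English description precedes it below -/
import Mathlib

section
/- Let (x_i, y_i) ∈ ℝ² × ℝ², i = 1,…,m, be given. The following are equivalent: (1) there exist COINCIDENT cameras P₁, P₂ and points w_i ∈ ℝ⁴∖{0} forming a reconstruction of {(x_i,y_i)}; (2) there exist coincident finite cameras P₁, P₂ and points w_i ∈ ℝ⁴∖{0} forming a reconstruction; (3) there exist coincident finite cameras P₁, P₂ and points w_i ∈ ℝ³ such that (P₁,P₂,{ŵ_i}) is a reconstruction; (4) there exist a finite camera P₂ coincident with P₁ = (I 0) and points w_i ∈ ℝ³ such that (P₁,P₂,{ŵ_i}) is a reconstruction. -/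
open Matrix

noncomputable section

/-- For `u ∈ ℝⁿ`, `hat u = (u, 1)ᵀ ∈ ℝⁿ⁺¹`. -/
def hat {n : ℕ} (u : Fin n → ℝ) : Fin (n + 1) → ℝ := Fin.snoc u 1

/-- The 3×4 matrix `(A b)` with left 3×3 block `A` and last column `b`. -/
def cam (A : Matrix (Fin 3) (Fin 3) ℝ) (b : Fin 3 → ℝ) : Matrix (Fin 3) (Fin 4) ℝ :=
  Matrix.of fun i => Fin.snoc (A i) (b i)

/-- The left 3×3 block of a 3×4 matrix. -/
def leftBlock (P : Matrix (Fin 3) (Fin 4) ℝ) : Matrix (Fin 3) (Fin 3) ℝ :=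
  P.submatrix id Fin.castSucc

/-- A (projective) camera is a real 3×4 matrix of rank 3. -/
def IsCamera (P : Matrix (Fin 3) (Fin 4) ℝ) : Prop := P.rank = 3

/-- A finite camera: the left 3×3 block is nonsingular. -/
def IsFiniteCamera (P : Matrix (Fin 3) (Fin 4) ℝ) : Prop := IsUnit (leftBlock P).det

/-- Two cameras are coincident if their camera centers agree up to a nonzero scale;
for rank-3 cameras the center is the (one-dimensional) kernel, so this says the two
cameras share a common nonzero kernel vector. -/
def Coincident (P Q : Matrix (Fin 3) (Fin 4) ℝ) : Prop :=
  ∃ c : Fin 4 → ℝ, c ≠ 0 ∧ P.mulVec c = 0 ∧ Q.mulVec c = 0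

/-- `u` is a nonzero scalar multiple of `v`. -/
def SimEq {n : ℕ} (u v : Fin n → ℝ) : Prop := ∃ c : ℝ, c ≠ 0 ∧ u = c • v

/-- The skew-symmetric matrix `[v]ₓ` with `[v]ₓ w = v × w`. -/
def skew (v : Fin 3 → ℝ) : Matrix (Fin 3) (Fin 3) ℝ :=
  !![0, -v 2, v 1; v 2, 0, -v 0; -v 1, v 0, 0]

/-- `(x, y)` is `(A, b)`-irregular. -/
def Irregular (A : Matrix (Fin 3) (Fin 3) ℝ) (b : Fin 3 → ℝ) (x y : Fin 2 → ℝ) : Prop :=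
  ((skew b * A).mulVec (hat x) = 0 ∧ Matrix.vecMul (hat y) (skew b) ≠ 0) ∨
  ((skew b * A).mulVec (hat x) ≠ 0 ∧ Matrix.vecMul (hat y) (skew b) = 0)


lemma camZero_mulVec (v : Fin 4 → ℝ) :
    (cam 1 0).mulVec v = fun i => v i.castSucc := by
  funext i
  simp [cam, Matrix.mulVec, dotProduct, Fin.sum_univ_castSucc, Fin.snoc_castSucc,
    Matrix.one_apply, ite_mul]
  exact Or.inl rfl

lemma leftBlock_camZero : leftBlock (cam 1 0) = 1 := by
  funext i j
  simp [leftBlock, cam]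

lemma isFiniteCamera_camZero : IsFiniteCamera (cam 1 0) := by
  rw [IsFiniteCamera, leftBlock_camZero]; simp

lemma hat_ne_zero {n : ℕ} (u : Fin n → ℝ) : hat u ≠ 0 := by
  intro h
  have := congrFun h (Fin.last n)
  simp [hat] at this

lemma surj_of_rank3 (P : Matrix (Fin 3) (Fin 4) ℝ) (h : P.rank = 3) :
    Function.Surjective P.mulVec := by
  have htop : LinearMap.range P.mulVecLin = ⊤ := by
    apply Submodule.eq_top_of_finrank_eq
    rw [show Module.finrank ℝ ↥(LinearMap.range P.mulVecLin) = P.rank from rfl, h]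
    simp
  intro t
  obtain ⟨v, hv⟩ := LinearMap.range_eq_top.mp htop t
  exact ⟨v, by simpa using hv⟩

lemma isCamera_of_isFiniteCamera {P : Matrix (Fin 3) (Fin 4) ℝ}
    (h : IsFiniteCamera P) : IsCamera P := by
  have hle : P.rank ≤ 3 := by
    have := P.rank_le_card_height
    simpa using this
  have hE : leftBlock P = P * (Matrix.of fun (k : Fin 4) (j : Fin 3) =>
      if k = j.castSucc then (1 : ℝ) else 0) := by
    funext i j
    simp [leftBlock, Matrix.mul_apply, mul_ite, mul_one, mul_zero]
  have h1 : (leftBlock P).rank = 3 := by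
    have := Matrix.rank_of_isUnit (leftBlock P) ((Matrix.isUnit_iff_isUnit_det _).mpr h)
    simpa using this
  have h2 : (leftBlock P).rank ≤ P.rank := by
    rw [hE]; exact Matrix.rank_mul_le_left _ _
  exact le_antisymm hle (by omega)

lemma mulVec_eq_of_lastCol_zero (M : Matrix (Fin 3) (Fin 4) ℝ)
    (hM : ∀ i, M i (Fin.last 3) = 0) (z z' : Fin 4 → ℝ)
    (h : ∀ j : Fin 3, z j.castSucc = z' j.castSucc) :
    M.mulVec z = M.mulVec z' := by
  funext i
  show ∑ j, M i j * z j = ∑ j, M i j * z' j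
  refine Finset.sum_congr rfl fun j _ => ?_
  refine Fin.lastCases ?_ (fun k => ?_) j
  · rw [hM i]; ring
  · rw [h k]

/-- The four versions of the projective reconstruction problem with COINCIDENT
cameras are equivalent. -/
theorem stmt5 (m : ℕ) (x y : Fin m → Fin 2 → ℝ) :
    List.TFAE
      [ (∃ P₁ P₂ : Matrix (Fin 3) (Fin 4) ℝ, IsCamera P₁ ∧ IsCamera P₂ ∧
          Coincident P₁ P₂ ∧
          ∃ w : Fin m → Fin 4 → ℝ, ∀ i, w i ≠ 0 ∧
            SimEq (P₁.mulVec (w i)) (hat (x i)) ∧ SimEq (P₂.mulVec (w i)) (hat (y i))),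
        (∃ P₁ P₂ : Matrix (Fin 3) (Fin 4) ℝ, IsFiniteCamera P₁ ∧ IsFiniteCamera P₂ ∧
          Coincident P₁ P₂ ∧
          ∃ w : Fin m → Fin 4 → ℝ, ∀ i, w i ≠ 0 ∧
            SimEq (P₁.mulVec (w i)) (hat (x i)) ∧ SimEq (P₂.mulVec (w i)) (hat (y i))),
        (∃ P₁ P₂ : Matrix (Fin 3) (Fin 4) ℝ, IsFiniteCamera P₁ ∧ IsFiniteCamera P₂ ∧
          Coincident P₁ P₂ ∧
          ∃ w : Fin m → Fin 3 → ℝ, ∀ i,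
            SimEq (P₁.mulVec (hat (w i))) (hat (x i)) ∧
            SimEq (P₂.mulVec (hat (w i))) (hat (y i))),
        (∃ P₂ : Matrix (Fin 3) (Fin 4) ℝ, IsFiniteCamera P₂ ∧
          Coincident (cam 1 0) P₂ ∧
          ∃ w : Fin m → Fin 3 → ℝ, ∀ i,
            SimEq ((cam 1 0).mulVec (hat (w i))) (hat (x i)) ∧
            SimEq (P₂.mulVec (hat (w i))) (hat (y i))) ] := by
  tfae_have 4 → 3 := by
    rintro ⟨P₂, hP₂, hco, w, hw⟩
    exact ⟨cam 1 0, P₂, isFiniteCamera_camZero, hP₂, hco, w, hw⟩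
  tfae_have 3 → 2 := by
    rintro ⟨P₁, P₂, h₁, h₂, hco, w, hw⟩
    exact ⟨P₁, P₂, h₁, h₂, hco, fun i => hat (w i),
      fun i => ⟨hat_ne_zero _, (hw i).1, (hw i).2⟩⟩
  tfae_have 2 → 1 := by
    rintro ⟨P₁, P₂, h₁, h₂, hco, w, hw⟩
    exact ⟨P₁, P₂, isCamera_of_isFiniteCamera h₁, isCamera_of_isFiniteCamera h₂, hco, w, hw⟩
  tfae_have 1 → 4 := by
    rintro ⟨P₁, P₂, h₁, h₂, ⟨c, hc, hc₁, hc₂⟩, w, hw⟩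
    choose h hh using fun j : Fin 3 => surj_of_rank3 P₁ h₁ (Pi.single j 1)
    set H : Matrix (Fin 4) (Fin 4) ℝ :=
      Matrix.of fun i => Fin.snoc (fun k : Fin 3 => h k i) (c i) with hHdef
    have hQHc : ∀ (Q : Matrix (Fin 3) (Fin 4) ℝ) (i : Fin 3) (j : Fin 3),
        (Q * H) i j.castSucc = Q.mulVec (h j) i := by
      intro Q i j
      simp [Matrix.mul_apply, hHdef, Matrix.mulVec, dotProduct, Fin.snoc_castSucc]
    have hQHl : ∀ (Q : Matrix (Fin 3) (Fin 4) ℝ) (i : Fin 3),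
        (Q * H) i (Fin.last 3) = Q.mulVec c i := by
      intro Q i
      simp only [Matrix.mul_apply, hHdef, Matrix.of_apply, Fin.snoc_last]; rfl
    have hP1H : P₁ * H = cam 1 0 := by
      funext i j
      refine Fin.lastCases ?_ (fun j' => ?_) j
      · rw [hQHl, hc₁]
        simp only [cam, Matrix.of_apply, Fin.snoc_last, Pi.zero_apply]
      · rw [hQHc, hh]
        simp [cam, Fin.snoc_castSucc, Matrix.one_apply, Pi.single_apply, eq_comm]
    have hHmv : ∀ v : Fin 4 → ℝ, H.mulVec v =
        fun i => (∑ j : Fin 3, h j i * v j.castSucc) + c i * v (Fin.last 3) := by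
      intro v
      funext i
      show ∑ j, H i j * v j = _
      rw [Fin.sum_univ_castSucc]
      simp only [hHdef, Matrix.of_apply, Fin.snoc_castSucc, Fin.snoc_last]
    have hdetH : IsUnit H.det := by
      rw [isUnit_iff_ne_zero]
      intro hdet
      obtain ⟨v, hv0, hv⟩ := (Matrix.exists_mulVec_eq_zero_iff).mpr hdet
      have hfirst : ∀ j : Fin 3, v j.castSucc = 0 := by
        intro j
        have : (cam 1 0).mulVec v = 0 := by
          rw [← hP1H, ← Matrix.mulVec_mulVec, hv, Matrix.mulVec_zero]
        have := congrFun this j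
        rwa [camZero_mulVec] at this
      have hvl : v (Fin.last 3) = 0 := by
        by_contra hvl
        apply hc
        funext i
        have := congrFun hv i
        rw [hHmv] at this
        simp only [hfirst, mul_zero, Finset.sum_const_zero, zero_add] at this
        have := mul_eq_zero.mp this
        rcases this with h' | h'
        · exact h'
        · exact absurd h' hvl
      exact hv0 (funext fun j => Fin.lastCases hvl hfirst j)
    set Q₂ : Matrix (Fin 3) (Fin 4) ℝ := P₂ * H with hQ₂def
    have hQ₂last : ∀ i, Q₂ i (Fin.last 3) = 0 := by
      intro i
      rw [hQ₂def, hQHl, hc₂]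
      rfl
    have hQ₂rank : Q₂.rank = 3 := by
      rw [hQ₂def, Matrix.rank_mul_eq_left_of_isUnit_det H P₂ hdetH]
      exact h₂
    -- Q₂ is a finite camera
    have hBmv : ∀ v : Fin 4 → ℝ,
        (leftBlock Q₂).mulVec (fun j => v j.castSucc) = Q₂.mulVec v := by
      intro v
      funext i
      show ∑ j : Fin 3, leftBlock Q₂ i j * v j.castSucc = ∑ j : Fin 4, Q₂ i j * v j
      rw [Fin.sum_univ_castSucc (f := fun j : Fin 4 => Q₂ i j * v j), hQ₂last, zero_mul, add_zero]
      rfl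
    have hQ₂fin : IsFiniteCamera Q₂ := by
      have hsurj : Function.Surjective (leftBlock Q₂).mulVecLin := by
        intro t
        obtain ⟨v, hv⟩ := surj_of_rank3 Q₂ hQ₂rank t
        exact ⟨fun j => v j.castSucc, by simpa [hBmv v] using hv⟩
      have hinj : Function.Injective (leftBlock Q₂).mulVecLin :=
        LinearMap.injective_iff_surjective.mpr hsurj
      rw [IsFiniteCamera, isUnit_iff_ne_zero]
      intro hdet
      obtain ⟨v, hv0, hv⟩ := (Matrix.exists_mulVec_eq_zero_iff).mpr hdet
      exact hv0 (hinj (by simpa using hv))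
    -- coincidence with cam 1 0 via e₃
    have hco : Coincident (cam 1 0) Q₂ := by
      refine ⟨Pi.single (Fin.last 3) 1, ?_, ?_, ?_⟩
      · intro h0
        have := congrFun h0 (Fin.last 3)
        simp at this
      · rw [camZero_mulVec]
        funext i
        simp [Pi.single_apply, show i.castSucc ≠ 3 from Fin.ne_of_lt (Fin.castSucc_lt_last i)]
      · funext i
        rw [Matrix.mulVec_single]
        simp [hQ₂last, show Q₂ i 3 = 0 from hQ₂last i]
    -- the points
    have hHinv : H * H⁻¹ = 1 := Matrix.mul_nonsing_inv H hdetH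
    refine ⟨Q₂, hQ₂fin, hco, fun i => fun j => H⁻¹.mulVec (w i) j.castSucc, fun i => ?_⟩
    obtain ⟨-, hx, hy⟩ := hw i
    set u : Fin 4 → ℝ := H⁻¹.mulVec (w i) with hudef
    have hHu : H.mulVec u = w i := by
      rw [hudef, Matrix.mulVec_mulVec, hHinv, Matrix.one_mulVec]
    have hhat : ∀ j : Fin 3, hat (fun j => u j.castSucc) j.castSucc = u j.castSucc := by
      intro j
      simp [hat, Fin.snoc_castSucc]
    constructor
    · have : (cam 1 0).mulVec (hat fun j => u j.castSucc) = (cam 1 0).mulVec u := by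
        rw [camZero_mulVec, camZero_mulVec]
        funext j
        exact hhat j
      rw [this, ← hP1H, ← Matrix.mulVec_mulVec, hHu]
      exact hx
    · have : Q₂.mulVec (hat fun j => u j.castSucc) = Q₂.mulVec u :=
        mulVec_eq_of_lastCol_zero Q₂ hQ₂last _ _ hhat
      rw [this, hQ₂def, ← Matrix.mulVec_mulVec, hHu]
      exact hy
  tfae_finish
end
end

section
/- Let (x_i, y_i) ∈ ℝ² × ℝ², i = 1,…,m, be given. There exists a finite reconstruction (P₁ = (I 0), P₂, {ŵ_i}) of {(x_i,y_i)} with w_i ∈ ℝ³ in which P₁ and P₂ are coincident cameras if and only if {x_i} is projectively equivalent to {y_i}, i.e., there is a nonsingular H ∈ ℝ^{3×3} with H x̂_i a nonzero scalar multiple of ŷ_i for all i = 1,…,m. -/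
open Matrix

noncomputable section

@[simp] lemma snoc_three_eq {α : Type*} (v : Fin 3 → α) (t : α) :
    (Fin.snoc (α := fun _ => α) v t : Fin 4 → α) 3 = t :=
  Fin.snoc_last (α := fun _ => α) (p := v) (x := t)

lemma cam_mulVec (A : Matrix (Fin 3) (Fin 3) ℝ) (b : Fin 3 → ℝ) (v : Fin 3 → ℝ) (t : ℝ) :
    (cam A b).mulVec (Fin.snoc v t) = A.mulVec v + t • b := by
  funext i
  simp [cam, Matrix.mulVec, dotProduct, Fin.sum_univ_castSucc, mul_comm]

lemma cam_eta (P : Matrix (Fin 3) (Fin 4) ℝ) :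
    cam (leftBlock P) (fun i => P i (Fin.last 3)) = P := by
  funext i j
  refine Fin.lastCases ?_ ?_ j <;> simp [cam, leftBlock]

/-- A finite reconstruction with first camera `(I 0)` and coincident cameras exists
iff the two point sets are projectively equivalent. -/
theorem stmt6 (m : ℕ) (x y : Fin m → Fin 2 → ℝ) :
    (∃ P₂ : Matrix (Fin 3) (Fin 4) ℝ, IsFiniteCamera P₂ ∧ Coincident (cam 1 0) P₂ ∧
      ∃ w : Fin m → Fin 3 → ℝ, ∀ i,
        SimEq ((cam 1 0).mulVec (hat (w i))) (hat (x i)) ∧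
        SimEq (P₂.mulVec (hat (w i))) (hat (y i))) ↔
    (∃ H : Matrix (Fin 3) (Fin 3) ℝ, IsUnit H.det ∧
      ∀ i, SimEq (H.mulVec (hat (x i))) (hat (y i))) := by
  constructor
  · rintro ⟨P₂, hfin, ⟨c, hc0, h1, h2⟩, w, hw⟩
    set A := leftBlock P₂ with hA
    set b : Fin 3 → ℝ := fun i => P₂ i (Fin.last 3) with hb
    have hP : P₂ = cam A b := (cam_eta P₂).symm
    have hcs : c = Fin.snoc (fun j => c (Fin.castSucc j)) (c (Fin.last 3)) := by
      funext j; refine Fin.lastCases ?_ ?_ j <;> simp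
    rw [hcs, cam_mulVec] at h1
    rw [hP, hcs, cam_mulVec] at h2
    have hcz : (fun j => c (Fin.castSucc j)) = 0 := by simpa using h1
    have hclast : c (Fin.last 3) ≠ 0 := by
      intro h0
      apply hc0
      rw [hcs, hcz, h0]
      funext j; refine Fin.lastCases ?_ ?_ j <;> simp
    have hbz : b = 0 := by
      rw [hcz] at h2
      simp at h2
      rcases h2 with h | h
      · exact absurd h hclast
      · exact h
    refine ⟨A, hfin, fun i => ?_⟩
    obtain ⟨⟨c₁, hc₁, hw1⟩, ⟨c₂, hc₂, hw2⟩⟩ := hw i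
    have hwi : w i = c₁ • hat (x i) := by
      have : (cam 1 0).mulVec (hat (w i)) = w i := by
        rw [show hat (w i) = Fin.snoc (w i) 1 from rfl, cam_mulVec]; simp
      rwa [this] at hw1
    have h2' : A.mulVec (w i) = c₂ • hat (y i) := by
      have : P₂.mulVec (hat (w i)) = A.mulVec (w i) := by
        rw [hP, show hat (w i) = Fin.snoc (w i) 1 from rfl, cam_mulVec, hbz]; simp
      rwa [this] at hw2
    rw [hwi, Matrix.mulVec_smul] at h2'
    refine ⟨c₂ / c₁, div_ne_zero hc₂ hc₁, ?_⟩
    have := congrArg (fun v => c₁⁻¹ • v) h2'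
    simp only [smul_smul, inv_mul_cancel₀ hc₁, one_smul] at this
    rw [this, mul_comm, ← div_eq_mul_inv]
  · rintro ⟨H, hH, hsim⟩
    refine ⟨cam H 0, ?_, ⟨Fin.snoc 0 1, ?_, ?_, ?_⟩, fun i => hat (x i), fun i => ⟨?_, ?_⟩⟩
    · show IsUnit (leftBlock (cam H 0)).det
      have : leftBlock (cam H 0) = H := by
        funext i j; simp [cam, leftBlock]
      rwa [this]
    · intro h
      have := congrFun h (Fin.last 3)
      simp at this
    · rw [cam_mulVec]; simp
    · rw [cam_mulVec]; simp
    · rw [show hat (hat (x i)) = Fin.snoc (hat (x i)) 1 from rfl, cam_mulVec]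
      exact ⟨1, one_ne_zero, by simp⟩
    · rw [show hat (hat (x i)) = Fin.snoc (hat (x i)) 1 from rfl, cam_mulVec]
      simpa using hsim i
end
end
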